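/- arXiv:0810.2839 — 10 statements merged into one kernel-verified Lean document; each statement's English description precedes it below -/
import Mathlib

section
/- Let q be a prime power, F = GF(q), and g : F × F → F any function. Then the map (x,y) ↦ (ax − y, ay + g(x,y)) is a bijection of F × F for every a ∈ F if and only if the map x ↦ g(x, ax − b) + a²x is a bijection of F for every a, b ∈ F. -/
/-- Spread criterion: for a finite field `F = GF(q)` and any function
`g : F × F → F`, the map `(x,y) ↦ (ax − y, ay + g(x,y))` is a bijection of
`F × F` for every `a` iff `x ↦ g(x, ax − b) + a²x` is a bijection of `F`
for all `a, b`. -/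
theorem stmt_0 (F : Type*) [Field F] [Fintype F] (g : F × F → F) :
    (∀ a : F, Function.Bijective
      (fun p : F × F => (a * p.1 - p.2, a * p.2 + g p))) ↔
    (∀ a b : F, Function.Bijective
      (fun x : F => g (x, a * x - b) + a ^ 2 * x)) := by
  constructor
  · intro h a b
    refine Finite.injective_iff_bijective.mp ?_
    intro x x' hx
    simp only at hx
    have h2 : ((a * x - (a * x - b), a * (a * x - b) + g (x, a * x - b)) : F × F)
        = (a * x' - (a * x' - b), a * (a * x' - b) + g (x', a * x' - b)) := by
      apply Prod.ext
      · ring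
      · simp only
        linear_combination hx
    have := (h a).injective (a₁ := (x, a * x - b)) (a₂ := (x', a * x' - b)) h2
    exact congrArg Prod.fst this
  · intro h a
    refine Finite.injective_iff_bijective.mp ?_
    rintro ⟨x, y⟩ ⟨x', y'⟩ hp
    simp only [Prod.mk.injEq] at hp
    obtain ⟨h1, h2⟩ := hp
    set b : F := a * x - y with hb
    have hy : y = a * x - b := by rw [hb]; ring
    have hy' : y' = a * x' - b := by
      linear_combination h1
    have hx : x = x' := by
      apply (h a b).injective
      simp only
      rw [← hy, ← hy']
      linear_combination h2 + a * h1
    exact Prod.ext hx (by rw [hy, hy', hx])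
end

section
/- Let q be a prime power, F = GF(q), V = F⁴, and g : F × F → F any function. Consider the family of 2-dimensional subspaces of V consisting of ℓ∞ = span{(0,0,0,1),(0,0,1,0)} together with ℓ_{x,y} = span{(0,1,x,y),(1,0,−y,g(x,y))} for each (x,y) ∈ F². Then every nonzero vector of V lies in exactly one subspace of this family (i.e. the family is a spread of PG(3,q)) if and only if the map x ↦ g(x, ax − b) + a²x is a bijection of F for every a, b ∈ F. -/
private lemma mem_linf_iff {F : Type*} [Field F] (v : Fin 4 → F) :
    v ∈ Submodule.span F {(![0,0,0,1] : Fin 4 → F), ![0,0,1,0]} ↔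
      v 0 = 0 ∧ v 1 = 0 := by
  rw [Submodule.mem_span_pair]
  constructor
  · rintro ⟨s, t, h⟩
    have h0 := congr_fun h 0
    have h1 := congr_fun h 1
    simp at h0 h1
    exact ⟨h0.symm, h1.symm⟩
  · rintro ⟨h0, h1⟩
    refine ⟨v 3, v 2, ?_⟩
    funext i
    fin_cases i <;> simp [h0, h1]

private lemma mem_l_iff {F : Type*} [Field F] (g : F × F → F) (x y : F) (v : Fin 4 → F) :
    v ∈ Submodule.span F {(![0,1,x,y] : Fin 4 → F), ![1,0,-y, g (x,y)]} ↔
      (v 2 = v 1 * x - v 0 * y ∧ v 3 = v 1 * y + v 0 * g (x,y)) := by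
  rw [Submodule.mem_span_pair]
  constructor
  · rintro ⟨s, t, h⟩
    have h0 := congr_fun h 0
    have h1 := congr_fun h 1
    have h2 := congr_fun h 2
    have h3 := congr_fun h 3
    simp at h0 h1 h2 h3
    subst h0 h1
    exact ⟨by linear_combination -h2, by linear_combination -h3⟩
  · rintro ⟨h2, h3⟩
    refine ⟨v 1, v 0, ?_⟩
    funext i
    fin_cases i <;> simp [h2, h3] <;> ring

/-- Theorem 1 of the paper: the family of totally isotropic lines
`ℓ∞ ∪ { ℓ_{x,y} : x,y ∈ F }` is a spread of `PG(3,q)` (every nonzero vector of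
`F⁴` lies in exactly one member) iff `x ↦ g(x, ax − b) + a²x` is a bijection
of `F` for all `a, b ∈ F`. -/
theorem stmt_1 (F : Type*) [Field F] [Fintype F] (g : F × F → F)
    (linf : Submodule F (Fin 4 → F))
    (hinf : linf = Submodule.span F {![0,0,0,1], ![0,0,1,0]})
    (l : F → F → Submodule F (Fin 4 → F))
    (hl : ∀ x y : F, l x y =
      Submodule.span F {![0,1,x,y], ![1,0,-y, g (x, y)]})
    (S : Set (Submodule F (Fin 4 → F)))
    (hS : S = insert linf {L | ∃ x y : F, L = l x y}) :
    (∀ v : Fin 4 → F, v ≠ 0 → ∃! L : Submodule F (Fin 4 → F), L ∈ S ∧ v ∈ L) ↔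
    (∀ a b : F, Function.Bijective
      (fun x : F => g (x, a * x - b) + a ^ 2 * x)) := by
  have hm : ∀ (x y : F) (v : Fin 4 → F), v ∈ l x y ↔
      (v 2 = v 1 * x - v 0 * y ∧ v 3 = v 1 * y + v 0 * g (x, y)) := by
    intro x y v
    rw [hl]
    exact mem_l_iff g x y v
  have hmi : ∀ v : Fin 4 → F, v ∈ linf ↔ v 0 = 0 ∧ v 1 = 0 := by
    intro v
    rw [hinf]
    exact mem_linf_iff v
  have hSmem : ∀ L : Submodule F (Fin 4 → F), L ∈ S ↔
      (L = linf ∨ ∃ x y : F, L = l x y) := by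
    intro L; rw [hS]; simp [Set.mem_insert_iff]
  have hlS : ∀ x y : F, l x y ∈ S := fun x y => (hSmem _).mpr (Or.inr ⟨x, y, rfl⟩)
  constructor
  · -- spread → bijective
    intro h a b
    rw [Function.bijective_iff_existsUnique]
    intro c
    set v : Fin 4 → F := ![1, a, b, c - a * b] with hv
    have hvne : v ≠ 0 := by
      intro hz
      have := congr_fun hz 0
      simp [hv] at this
    obtain ⟨L, ⟨hLS, hvL⟩, hLu⟩ := h v hvne
    rcases (hSmem L).mp hLS with rfl | ⟨x, y, rfl⟩
    · have := ((hmi v).mp hvL).1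
      simp [hv] at this
    · obtain ⟨e2, e3⟩ := (hm x y v).mp hvL
      simp only [hv, Matrix.cons_val_zero, Matrix.cons_val_one, Matrix.head_cons,
        Matrix.cons_val_two, Matrix.tail_cons, Matrix.cons_val_three] at e2 e3
      -- e2 : b = a * x - 1 * y, e3 : c - a*b = a * y + 1 * g (x,y)
      have hy : y = a * x - b := by linear_combination e2
      refine ⟨x, ?_, ?_⟩
      · show g (x, a * x - b) + a ^ 2 * x = c
        rw [← hy]
        linear_combination -e3 - a * e2
      · intro x' hx'
        have hx' : g (x', a * x' - b) + a ^ 2 * x' = c := hx'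
        have hmem : v ∈ l x' (a * x' - b) := by
          rw [hm]
          constructor
          · simp [hv]
          · simp [hv]
            linear_combination -hx'
        have := hLu (l x' (a * x' - b)) ⟨hlS _ _, hmem⟩
        -- l x' (a*x'-b) = l x y ⇒ x' = x
        have hu : (![0, 1, x', a * x' - b] : Fin 4 → F) ∈ l x' (a * x' - b) := by
          rw [hm]; constructor <;> simp
        rw [this] at hu
        have := ((hm x y _).mp hu).1
        simpa using this
  · -- bijective → spread
    intro hbij v hvne
    by_cases h0 : v 0 = 0
    · by_cases h1 : v 1 = 0
      · -- v ∈ linf only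
        refine ⟨linf, ⟨(hSmem _).mpr (Or.inl rfl), (hmi v).mpr ⟨h0, h1⟩⟩, ?_⟩
        rintro L ⟨hLS, hvL⟩
        rcases (hSmem L).mp hLS with rfl | ⟨x, y, rfl⟩
        · rfl
        · obtain ⟨e2, e3⟩ := (hm x y v).mp hvL
          rw [h0, h1] at e2 e3
          exfalso
          apply hvne
          funext i
          fin_cases i <;> simp_all
      · -- v 0 = 0, v 1 ≠ 0
        refine ⟨l (v 2 / v 1) (v 3 / v 1), ⟨hlS _ _, ?_⟩, ?_⟩
        · rw [hm]
          constructor <;> (rw [h0]; field_simp; ring)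
        · rintro L ⟨hLS, hvL⟩
          rcases (hSmem L).mp hLS with rfl | ⟨x, y, rfl⟩
          · exact absurd ((hmi v).mp hvL).2 h1
          · obtain ⟨e2, e3⟩ := (hm x y v).mp hvL
            rw [h0] at e2 e3
            have hx : x = v 2 / v 1 := by field_simp; linear_combination -e2
            have hy : y = v 3 / v 1 := by field_simp; linear_combination -e3
            rw [hx, hy]
    · -- v 0 ≠ 0
      set a := v 1 / v 0 with ha
      set b := v 2 / v 0 with hb
      set c := v 3 / v 0 + a * b with hc
      have hva : v 1 = v 0 * a := by rw [ha]; field_simp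
      have hvb : v 2 = v 0 * b := by rw [hb]; field_simp
      have hc' : v 0 * c = v 3 + v 0 * (a * b) := by
        rw [hc]; field_simp
      obtain ⟨x, hx, hxu⟩ :=
        (Function.bijective_iff_existsUnique _).mp (hbij a b) c
      have hx : g (x, a * x - b) + a ^ 2 * x = c := hx
      refine ⟨l x (a * x - b), ⟨hlS _ _, ?_⟩, ?_⟩
      · rw [hm]
        constructor
        · linear_combination hvb - x * hva
        · linear_combination -(v 0) * hx - hc' + (b - a * x) * hva
      · rintro L ⟨hLS, hvL⟩
        rcases (hSmem L).mp hLS with rfl | ⟨x', y', rfl⟩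
        · exact absurd ((hmi v).mp hvL).1 h0
        · obtain ⟨e2, e3⟩ := (hm x' y' v).mp hvL
          have h5 : v 0 * y' = v 0 * (a * x' - b) := by
            linear_combination e2 + x' * hva - hvb
          have hy' : y' = a * x' - b := mul_left_cancel₀ h0 h5
          rw [hy'] at e3
          have h6 : v 0 * (g (x', a * x' - b) + a ^ 2 * x') = v 0 * c := by
            linear_combination -e3 - hc' - (a * x' - b) * hva
          have hfx' : g (x', a * x' - b) + a ^ 2 * x' = c := mul_left_cancel₀ h0 h6
          rw [hy', hxu x' hfx']
end

section
/- Let q be a prime power, F = GF(q), and g : F × F → F any function. Then the map (x,y) ↦ (ax − y, ay + g(x,y)) is a bijection of F × F for every a ∈ F if and only if for all pairs (x,y) ≠ (u,v) in F × F one has (y − v)² + (x − u)(g(x,y) − g(u,v)) ≠ 0. -/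
/-- For a finite field `F = GF(q)` and any `g : F × F → F`, the map
`(x,y) ↦ (ax − y, ay + g(x,y))` is a bijection of `F × F` for every `a ∈ F`
iff `(y − v)² + (x − u)(g(x,y) − g(u,v)) ≠ 0` for all `(x,y) ≠ (u,v)`. -/
theorem stmt_2 (F : Type*) [Field F] [Fintype F] (g : F × F → F) :
    (∀ a : F, Function.Bijective
      (fun p : F × F => (a * p.1 - p.2, a * p.2 + g p))) ↔
    (∀ x y u v : F, (x, y) ≠ (u, v) →
      (y - v) ^ 2 + (x - u) * (g (x, y) - g (u, v)) ≠ 0) := by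
  constructor
  · intro h x y u v hne heq
    have hxu : x ≠ u := by
      intro hx
      subst hx
      have h0 : (y - v) ^ 2 = 0 := by linear_combination heq
      have hyv : y - v = 0 := by
        exact pow_eq_zero_iff (two_ne_zero) |>.mp h0
      exact hne (by rw [sub_eq_zero.mp hyv])
    have hxu' : x - u ≠ 0 := sub_ne_zero.mpr hxu
    set a := (y - v) / (x - u) with ha
    have h1 : a * x - y = a * u - v := by
      have hax : a * (x - u) = y - v := by rw [ha]; exact div_mul_cancel₀ _ hxu'
      linear_combination hax
    have h2 : a * y + g (x, y) = a * v + g (u, v) := by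
      rw [ha]
      field_simp
      linear_combination heq
    have := (h a).injective (a₁ := (x, y)) (a₂ := (u, v)) (by simp [h1, h2])
    exact hne this
  · intro h a
    rw [← Finite.injective_iff_bijective]
    rintro ⟨x, y⟩ ⟨u, v⟩ hpq
    simp only [Prod.mk.injEq] at hpq
    obtain ⟨h1, h2⟩ := hpq
    by_contra hne
    exact h x y u v hne (by linear_combination (v - y) * h1 + (x - u) * h2)
end

section
/- Let q be a prime power, F = GF(q), h₁ : F → F any function, and h₂ : F → F an additive function (h₂(x+u) = h₂(x) + h₂(u) for all x,u ∈ F). Set g(x,y) = h₁(x) + h₂(y). Then the map (x,y) ↦ (ax − y, ay + g(x,y)) is a bijection of F × F for every a ∈ F if and only if the map x ↦ h₁(x) + h₂(ax) + a²x is a bijection of F for every a ∈ F. -/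
/-- For `g(x,y) = h₁(x) + h₂(y)` with `h₂` additive, the spread condition
(the map `(x,y) ↦ (ax − y, ay + g(x,y))` being a bijection of `F × F` for all
`a`) holds iff `x ↦ h₁(x) + h₂(ax) + a²x` is a bijection of `F` for all `a`. -/
theorem stmt_3 (F : Type*) [Field F] [Fintype F] (h₁ h₂ : F → F)
    (hadd : ∀ x u : F, h₂ (x + u) = h₂ x + h₂ u) :
    (∀ a : F, Function.Bijective
      (fun p : F × F => (a * p.1 - p.2, a * p.2 + (h₁ p.1 + h₂ p.2)))) ↔
    (∀ a : F, Function.Bijective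
      (fun x : F => h₁ x + h₂ (a * x) + a ^ 2 * x)) := by
  have h0 : h₂ 0 = 0 := by
    have := hadd 0 0
    simp at this
    linear_combination this
  have hsub : ∀ x y : F, h₂ (x - y) = h₂ x - h₂ y := by
    intro x y
    have := hadd (x - y) y
    simp at this
    linear_combination -this
  constructor
  · intro H a
    rw [← Finite.injective_iff_bijective]
    intro x x' hx
    simp only at hx
    have hT := (H a).1 (a₁ := (x, a * x)) (a₂ := (x', a * x'))
      (by simp only [Prod.mk.injEq]; exact ⟨by ring, by linear_combination hx⟩)
    exact (Prod.mk.injEq _ _ _ _ ▸ hT).1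
  · intro H a
    rw [← Finite.injective_iff_bijective]
    rintro ⟨x, y⟩ ⟨x', y'⟩ hp
    simp only [Prod.mk.injEq] at hp
    obtain ⟨h1, h2⟩ := hp
    have hy : y - y' = a * (x - x') := by linear_combination -h1
    have key : h₁ x + h₂ (a * x) + a ^ 2 * x = h₁ x' + h₂ (a * x') + a ^ 2 * x' := by
      have e1 : h₂ y - h₂ y' = h₂ (a * x) - h₂ (a * x') := by
        rw [← hsub, ← hsub, hy, mul_sub]
      linear_combination h2 - e1 - a * hy
    have hxx := (H a).1 key
    subst hxx
    have : y = y' := by linear_combination -h1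
    simp [this]
end

section
/- Let h ≥ 0, q = 3^(2h+1), α = 3^(h+1), and F = GF(q). For a ∈ F define f_a(x) = x^(2α+3) + (ax)^α − a²x. If f_a is a bijection of F for some a ∈ F, then f_{aζ²} is a bijection of F for every ζ ∈ F \ {0}. -/
/-- With `q = 3^(2h+1)`, `α = 3^(h+1)` and `f_a(x) = x^(2α+3) + (ax)^α − a²x`:
if `f_a` is a bijection of `F` for some `a`, then so is `f_{aζ²}` for every
nonzero `ζ`. -/
theorem stmt_7 (h : ℕ) (F : Type*) [Field F] [Fintype F]
    (hq : Fintype.card F = 3 ^ (2 * h + 1))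
    (f : F → F → F)
    (hf : ∀ a x : F, f a x =
      x ^ (2 * 3 ^ (h + 1) + 3) + (a * x) ^ (3 ^ (h + 1)) - a ^ 2 * x)
    (a : F) (ha : Function.Bijective (f a)) :
    ∀ ζ : F, ζ ≠ 0 → Function.Bijective (f (a * ζ ^ 2)) := by
  intro ζ hζ
  set t : ℕ := 3 ^ h - 1 with htdef
  have ht : 3 ^ h = t + 1 := (Nat.succ_pred_eq_of_pos (pow_pos (by norm_num) h)).symm
  have hα : 3 ^ (h + 1) = 3 * (t + 1) := by rw [← ht]; ring
  have hzq : ζ ^ (3 * (t + 1) ^ 2) = ζ := by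
    have := FiniteField.pow_card ζ
    rw [hq] at this
    rw [show 3 * (t + 1) ^ 2 = 3 ^ (2 * h + 1) from by rw [← ht]; ring]
    exact this
  have key : ∀ x, f (a * ζ ^ 2) (ζ ^ (3 * t + 2) * x) = ζ ^ (3 * t + 6) * f a x := by
    intro x
    rw [hf, hf, hα]
    have e1 : (ζ ^ (3 * t + 2) * x) ^ (2 * (3 * (t + 1)) + 3)
        = ζ ^ (3 * t + 6) * x ^ (2 * (3 * (t + 1)) + 3) := by
      rw [mul_pow, ← pow_mul,
        show (3 * t + 2) * (2 * (3 * (t + 1)) + 3) = 3 * (t + 1) ^ 2 * 6 + 3 * t from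
          by ring, pow_add, pow_mul, hzq,
        show ζ ^ 6 * ζ ^ (3 * t) = ζ ^ (3 * t + 6) from by rw [← pow_add]; ring_nf]
    have e2 : (a * ζ ^ 2 * (ζ ^ (3 * t + 2) * x)) ^ (3 * (t + 1))
        = ζ ^ (3 * t + 6) * (a * x) ^ (3 * (t + 1)) := by
      have : a * ζ ^ 2 * (ζ ^ (3 * t + 2) * x) = ζ ^ (3 * t + 4) * (a * x) := by ring
      rw [this, mul_pow, ← pow_mul,
        show (3 * t + 4) * (3 * (t + 1)) = 3 * (t + 1) ^ 2 * 3 + (3 * t + 3) from by ring,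
        pow_add, pow_mul, hzq,
        show ζ ^ 3 * ζ ^ (3 * t + 3) = ζ ^ (3 * t + 6) from by rw [← pow_add]; ring_nf]
    rw [e1, e2]
    ring
  have hc : (ζ : F) ^ (3 * t + 2) ≠ 0 := pow_ne_zero _ hζ
  have hfun : f (a * ζ ^ 2) = fun y => ζ ^ (3 * t + 6) * f a ((ζ ^ (3 * t + 2))⁻¹ * y) := by
    funext y
    have := key ((ζ ^ (3 * t + 2))⁻¹ * y)
    rwa [← mul_assoc, mul_inv_cancel₀ hc, one_mul] at this
  rw [hfun]
  exact (Equiv.mulLeft₀ _ (pow_ne_zero (3 * t + 6) hζ)).bijective.comp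
    (ha.comp (Equiv.mulLeft₀ _ (inv_ne_zero hc)).bijective)
end

section
/- Let h ≥ 1, q = 3^(2h+1), α = 3^(h+1) (so α > 3), F = GF(q), and let a ∈ F with a ≠ 0. Let f_a = X^(2α+3) + a^α·X^α − a²·X ∈ F[X]. Then f_a is indecomposable: whenever f_a = g ∘ h (composition of polynomials g, h ∈ F[X]), either g has degree 1 or h has degree 1. -/
open Polynomial

private lemma aux_deriv {F : Type*} [Field F] (h3 : ∀ n : ℕ, ¬ 3 ∣ n → (n : F) ≠ 0)
    (p : F[X]) (hp : (derivative p).natDegree = 0) (hp1 : 1 ≤ p.natDegree) :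
    p.natDegree = 1 ∨ 3 ∣ p.natDegree := by
  by_contra hcon
  push_neg at hcon
  obtain ⟨h1, h2⟩ := hcon
  have hn2 : 2 ≤ p.natDegree := by omega
  have hpne : p ≠ 0 := by
    intro hz
    rw [hz] at hn2
    simp at hn2
  have hlc : p.coeff p.natDegree ≠ 0 := by
    rw [coeff_natDegree]
    exact leadingCoeff_ne_zero.mpr hpne
  have hcoef : (derivative p).coeff (p.natDegree - 1) ≠ 0 := by
    rw [coeff_derivative]
    have hrw : p.natDegree - 1 + 1 = p.natDegree := by omega
    have hc : ((p.natDegree - 1 : ℕ) : F) + 1 = (p.natDegree : F) := by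
      have := congrArg (Nat.cast : ℕ → F) hrw
      push_cast at this
      exact this
    rw [hrw, hc]
    exact mul_ne_zero hlc (h3 p.natDegree h2)
  have := le_natDegree_of_ne_zero hcoef
  omega

/-- Indecomposability lemma: for `q = 3^(2h+1)`, `α = 3^(h+1)` with `h ≥ 1`
(so `α > 3`) and `a ≠ 0`, the polynomial
`f_a = X^(2α+3) + a^α·X^α − a²·X ∈ F[X]` is indecomposable: whenever
`f_a = g ∘ h`, one of `g`, `h` has degree 1. -/
theorem stmt_10 (h : ℕ) (hh : 1 ≤ h) (F : Type*) [Field F] [Fintype F]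
    (hq : Fintype.card F = 3 ^ (2 * h + 1)) (a : F) (ha : a ≠ 0) :
    ∀ g H : F[X],
      (X ^ (2 * 3 ^ (h + 1) + 3) + C (a ^ (3 ^ (h + 1))) * X ^ (3 ^ (h + 1))
        - C (a ^ 2) * X) = g.comp H →
      g.natDegree = 1 ∨ H.natDegree = 1 := by
  intro g H hcomp
  -- characteristic 3
  have h31 : (3 : F) = 0 := by
    have hz := FiniteField.cast_card_eq_zero F
    rw [hq] at hz
    push_cast at hz
    exact pow_eq_zero_iff (by omega) |>.mp hz
  have hcast : ∀ n : ℕ, ¬ 3 ∣ n → (n : F) ≠ 0 := by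
    intro n hn hz
    have h2 : (2 : F) ≠ 0 := by
      intro h2z
      have h3eq : (3 : F) = 2 + 1 := by norm_num
      rw [h3eq, h2z, zero_add] at h31
      exact one_ne_zero h31
    have hrepr : (n : F) = ((n % 3 : ℕ) : F) := by
      conv_lhs => rw [show n = 3 * (n / 3) + n % 3 by omega]
      push_cast
      rw [h31]
      ring
    rw [hrepr] at hz
    rcases (by omega : n % 3 = 1 ∨ n % 3 = 2) with hm | hm <;> rw [hm] at hz
    · exact one_ne_zero (by exact_mod_cast hz)
    · exact h2 (by exact_mod_cast hz)
  -- derivative of f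
  have hαz : ((3 ^ (h + 1) : ℕ) : F) = 0 := by
    push_cast
    rw [h31]
    exact zero_pow (by omega)
  have hdz : ((2 * 3 ^ (h + 1) + 3 : ℕ) : F) = 0 := by
    push_cast
    rw [h31]
    simp [zero_pow (Nat.succ_ne_zero h)]
  have hdf : derivative (X ^ (2 * 3 ^ (h + 1) + 3) + C (a ^ (3 ^ (h + 1))) * X ^ (3 ^ (h + 1))
      - C (a ^ 2) * X : F[X]) = C (-a ^ 2) := by
    rw [derivative_sub, derivative_add, derivative_X_pow, derivative_C_mul,
      derivative_X_pow, derivative_C_mul, derivative_X, hdz, hαz]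
    simp
  rw [hcomp, derivative_comp] at hdf
  have hca : (C (-a ^ 2) : F[X]) ≠ 0 := by
    simp only [ne_eq, C_eq_zero, neg_eq_zero]
    exact pow_ne_zero 2 ha
  have hH' : derivative H ≠ 0 := by
    intro hz
    rw [hz, zero_mul] at hdf
    exact hca hdf.symm
  have hg' : (derivative g).comp H ≠ 0 := by
    intro hz
    rw [hz, mul_zero] at hdf
    exact hca hdf.symm
  have hdeg0 : (derivative H).natDegree + ((derivative g).comp H).natDegree = 0 := by
    rw [← natDegree_mul hH' hg', hdf, natDegree_C]
  -- natDegree of f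
  have hdegf : (X ^ (2 * 3 ^ (h + 1) + 3) + C (a ^ (3 ^ (h + 1))) * X ^ (3 ^ (h + 1))
      - C (a ^ 2) * X : F[X]).natDegree = 2 * 3 ^ (h + 1) + 3 := by
    compute_degree!
    · simp only [if_neg (show ¬(2 * 3 ^ (h + 1) + 3 = 3 ^ (h + 1)) by omega),
        if_neg (show ¬(2 * 3 ^ (h + 1) + 3 = 1) by omega)]
      norm_num
    · omega
    · omega
  have hprod : g.natDegree * H.natDegree = 2 * 3 ^ (h + 1) + 3 := by
    rw [← natDegree_comp, ← hcomp, hdegf]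
  have hHpos : 1 ≤ H.natDegree := by
    rcases Nat.eq_zero_or_pos H.natDegree with h0 | h0
    · rw [h0, mul_zero] at hprod
      omega
    · exact h0
  have hgpos : 1 ≤ g.natDegree := by
    rcases Nat.eq_zero_or_pos g.natDegree with h0 | h0
    · rw [h0, zero_mul] at hprod
      omega
    · exact h0
  have hdH : (derivative H).natDegree = 0 := by omega
  have hdgH : ((derivative g).comp H).natDegree = 0 := by omega
  have hdg : (derivative g).natDegree = 0 := by
    rw [natDegree_comp] at hdgH
    rcases Nat.mul_eq_zero.mp hdgH with h0 | h0
    · exact h0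
    · omega
  have hG := aux_deriv hcast g hdg hgpos
  have hHd := aux_deriv hcast H hdH hHpos
  rcases hG with hG | hG
  · exact Or.inl hG
  rcases hHd with hHd | hHd
  · exact Or.inr hHd
  exfalso
  obtain ⟨s, hs⟩ := hG
  obtain ⟨t, ht⟩ := hHd
  obtain ⟨k, hk⟩ : (3 : ℕ) ∣ 3 ^ h := dvd_pow_self 3 (by omega)
  have hsplit : 3 ^ (h + 1) = 3 * 3 ^ h := pow_succ' 3 h
  have h9 : 9 * (s * t) = 2 * 3 ^ (h + 1) + 3 := by
    rw [← hprod, hs, ht]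
    ring
  obtain ⟨u, hu⟩ : ∃ u, u = s * t := ⟨s * t, rfl⟩
  rw [← hu] at h9
  omega
end

section
/- Let h ≥ 0, q = 2^(2h+1), α = 2^(h+1), and F = GF(q). Then the map x ↦ x^(α+1) is a bijection of F; equivalently, X^(α+1) is a permutation polynomial over GF(q). -/
lemma cop_aux (h : ℕ) : Nat.Coprime (2 ^ (h + 1) + 1) (2 ^ (2 * h + 1) - 1) := by
  have hsq : 2 ^ (h + 1) * 2 ^ (h + 1) = 2 * 2 ^ (2 * h + 1) := by ring
  have h2 : (2:ℕ) ≤ 2 ^ (h + 1) := Nat.one_lt_two_pow (by omega)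
  have hq1 : (1:ℕ) ≤ 2 ^ (2 * h + 1) := Nat.one_le_two_pow
  set g := Nat.gcd (2 ^ (h + 1) + 1) (2 ^ (2 * h + 1) - 1) with hg
  have d1 : g ∣ 2 ^ (h + 1) + 1 := Nat.gcd_dvd_left _ _
  have d2 : g ∣ 2 ^ (2 * h + 1) - 1 := Nat.gcd_dvd_right _ _
  have d3 : g ∣ (2 ^ (h + 1) + 1) * (2 ^ (h + 1) - 1) := d1.mul_right _
  have d4 : g ∣ 2 * (2 ^ (2 * h + 1) - 1) := d2.mul_left _
  have key : (2 ^ (h + 1) + 1) * (2 ^ (h + 1) - 1) - 2 * (2 ^ (2 * h + 1) - 1) = 1 := by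
    have e := Nat.sq_sub_sq (2 ^ (h + 1)) 1
    simp only [sq] at e
    omega
  have : g ∣ 1 := key ▸ Nat.dvd_sub d3 d4
  exact Nat.eq_one_of_dvd_one this

/-- With `q = 2^(2h+1)`, `α = 2^(h+1)` and `F = GF(q)`, the map
`x ↦ x^(α+1)` is a bijection of `F`. -/
theorem stmt_14 (h : ℕ) (F : Type*) [Field F] [Fintype F]
    (hq : Fintype.card F = 2 ^ (2 * h + 1)) :
    Function.Bijective (fun x : F => x ^ (2 ^ (h + 1) + 1)) := by
  rw [Fintype.bijective_iff_injective_and_card]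
  refine ⟨?_, rfl⟩
  intro x y hxy
  simp only at hxy
  by_cases hx : x = 0
  · subst hx
    rw [zero_pow (by omega)] at hxy
    exact ((pow_eq_zero_iff (by omega)).mp hxy.symm).symm
  by_cases hy : y = 0
  · subst hy
    rw [zero_pow (by omega)] at hxy
    exact (pow_eq_zero_iff (by omega)).mp hxy
  have hu : (x * y⁻¹) ^ (2 ^ (h + 1) + 1) = 1 := by
    rw [mul_pow, inv_pow, hxy, mul_inv_cancel₀ (pow_ne_zero _ hy)]
  have h1 : orderOf (x * y⁻¹) ∣ 2 ^ (h + 1) + 1 := orderOf_dvd_of_pow_eq_one hu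
  have h2 : orderOf (x * y⁻¹) ∣ 2 ^ (2 * h + 1) - 1 := by
    rw [← hq]
    exact orderOf_dvd_of_pow_eq_one
      (FiniteField.pow_card_sub_one_eq_one _ (mul_ne_zero hx (inv_ne_zero hy)))
  have : orderOf (x * y⁻¹) = 1 :=
    Nat.eq_one_of_dvd_one ((cop_aux h) ▸ Nat.dvd_gcd h1 h2)
  have := orderOf_eq_one_iff.mp this
  field_simp at this
  exact this
end

section
/- Let h ≥ 0, q = 2^(2h+1), α = 2^(h+1), and F = GF(q). For every a ∈ F, the map x ↦ x^(α+1) + (ax)^α + a²x is a bijection of F; equivalently, it is a permutation polynomial over GF(q). (Combined with the spread criterion, this gives the existence of the Tits–Lüneburg spread.) -/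
/-- Tits–Lüneburg permutation polynomials: with `q = 2^(2h+1)`,
`α = 2^(h+1)` and `F = GF(q)`, the map `x ↦ x^(α+1) + (ax)^α + a²x` is a
bijection of `F` for every `a ∈ F`. -/
theorem stmt_15 (h : ℕ) (F : Type*) [Field F] [Fintype F]
    (hq : Fintype.card F = 2 ^ (2 * h + 1)) (a : F) :
    Function.Bijective (fun x : F =>
      x ^ (2 ^ (h + 1) + 1) + (a * x) ^ (2 ^ (h + 1)) + a ^ 2 * x) := by
  haveI hp2 : CharP F 2 := by
    have hchar := ringChar.charP F
    have hdvd : ringChar F ∣ Fintype.card F := by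
      rw [← CharP.cast_eq_zero_iff F (ringChar F)]
      exact FiniteField.cast_card_eq_zero F
    have hprime : (ringChar F).Prime := CharP.char_is_prime F (ringChar F)
    have h2 : ringChar F ∣ 2 := hprime.dvd_of_dvd_pow (hq ▸ hdvd)
    have : ringChar F = 2 := (Nat.prime_dvd_prime_iff_eq hprime Nat.prime_two).mp h2
    exact this ▸ hchar
  haveI : Fact (Nat.Prime 2) := ⟨Nat.prime_two⟩
  have two0 : (2 : F) = 0 := by exact_mod_cast CharP.cast_eq_zero F 2
  have frob : ∀ u v : F, (u + v) ^ 2 ^ (h + 1) = u ^ 2 ^ (h + 1) + v ^ 2 ^ (h + 1) :=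
    fun u v => add_pow_char_pow u v 2 (h + 1)
  have pc : ∀ z : F, (z ^ 2 ^ (h + 1)) ^ 2 ^ (h + 1) = z ^ 2 := by
    intro z
    rw [← pow_mul]
    have hmul : 2 ^ (h + 1) * 2 ^ (h + 1) = 2 ^ (2 * h + 1) * 2 := by
      rw [← pow_add, ← pow_succ]; ring_nf
    rw [hmul, pow_mul, ← hq, FiniteField.pow_card]
  set A : ℕ := 2 ^ (h + 1) with hA
  have hAne : A ≠ 0 := by positivity
  rw [Finite.injective_iff_bijective.symm]
  intro x y hxy
  simp only at hxy
  set s : F := x + y with hs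
  clear_value s
  have hy : y = x + s := by
    rw [hs, ← add_assoc, CharTwo.add_self_eq_zero, zero_add]
  have E : x ^ A * s + x * s ^ A + s ^ A * s + a ^ A * s ^ A + a ^ 2 * s = 0 := by
    rw [hy] at hxy
    rw [pow_succ x A, pow_succ (x + s) A, frob x s, mul_add a x s,
      frob (a * x) (a * s)] at hxy
    linear_combination -hxy
  have EA : x ^ 2 * s ^ A + x ^ A * s ^ 2 + s ^ 2 * s ^ A + a ^ 2 * s ^ 2
      + (a ^ A) ^ 2 * s ^ A = 0 := by
    have h2 : (x ^ A * s + x * s ^ A + s ^ A * s + a ^ A * s ^ A + a ^ 2 * s) ^ A = 0 := by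
      rw [E]; exact zero_pow hAne
    simp only [frob, mul_pow, pc] at h2
    linear_combination h2
  have key : s ^ A * ((x + a ^ A) * (x + a ^ A + s)) = 0 := by
    linear_combination EA + s * E
      + (a ^ A * x * s ^ A - x ^ A * s ^ 2 - s ^ A * s ^ 2 - a ^ 2 * s ^ 2) * two0
  have sA_eq : s ^ A * s = 0 → x = y := by
    intro ht
    rcases mul_eq_zero.mp ht with h1 | h1
    · have : s = 0 := pow_eq_zero_iff hAne |>.mp h1
      rw [hy, this, add_zero]
    · rw [hy, h1, add_zero]
  rcases mul_eq_zero.mp key with h1 | h1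
  · have : s = 0 := pow_eq_zero_iff hAne |>.mp h1
    rw [hy, this, add_zero]
  rcases mul_eq_zero.mp h1 with h2 | h2
  · have hx : x = a ^ A := by
      rw [CharTwo.add_eq_iff_eq_add] at h2; simpa using h2
    refine sA_eq ?_
    rw [hx, pc a] at E
    linear_combination E + (-(a ^ 2 * s) - a ^ A * s ^ A) * two0
  · have hx : x = a ^ A + s := by
      rw [add_assoc, CharTwo.add_eq_iff_eq_add] at h2; simpa using h2
    refine sA_eq ?_
    rw [hx, frob (a ^ A) s, pc a] at E
    linear_combination E + (-(a ^ 2 * s) - a ^ A * s ^ A - s ^ A * s) * two0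
end

section
/- Let q be an odd prime power, F = GF(q), and h₁ : F → F a function such that the map x ↦ h₁(x) + a²x is injective for every a ∈ F. Then for all distinct x, y ∈ F there are no z₁, z₂ ∈ F, not both zero, satisfying (h₁(x) − h₁(y))·z₁² + (x − y)·z₂² = 0; equivalently, −(h₁(x) − h₁(y))/(x − y) is a nonsquare in F for all x ≠ y. -/
/-- Let `q` be odd and `h₁ : F → F` be such that `x ↦ h₁(x) + a²x` is
injective for every `a`. Then for distinct `x, y` there are no `z₁, z₂`, not
both zero, with `(h₁(x) − h₁(y))·z₁² + (x − y)·z₂² = 0`. -/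
theorem stmt_17 (F : Type*) [Field F] [Fintype F] (hq : Odd (Fintype.card F))
    (h₁ : F → F)
    (hinj : ∀ a : F, Function.Injective (fun x : F => h₁ x + a ^ 2 * x)) :
    ∀ x y : F, x ≠ y →
      ¬ ∃ z₁ z₂ : F, (z₁ ≠ 0 ∨ z₂ ≠ 0) ∧
        (h₁ x - h₁ y) * z₁ ^ 2 + (x - y) * z₂ ^ 2 = 0 := by
  intro x y hxy ⟨z₁, z₂, hz, heq⟩
  have hxy' : x - y ≠ 0 := sub_ne_zero.mpr hxy
  have hz₁ : z₁ ≠ 0 := by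
    rcases hz with h | h
    · exact h
    · intro h0
      apply h
      have : (x - y) * z₂ ^ 2 = 0 := by
        simpa [h0] using heq
      rcases mul_eq_zero.mp this with h' | h'
      · exact absurd h' hxy'
      · exact pow_eq_zero_iff (n := 2) (by norm_num) |>.mp h'
  set a := z₂ / z₁ with ha
  have key : h₁ x + a ^ 2 * x = h₁ y + a ^ 2 * y := by
    have hz₁2 : z₁ ^ 2 ≠ 0 := pow_ne_zero _ hz₁
    field_simp [ha]
    ring_nf
    ring_nf at heq
    have hw : z₁⁻¹ ^ 2 * z₁ ^ 2 = 1 := by field_simp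
    linear_combination z₁⁻¹ ^ 2 * heq + (h₁ y - h₁ x) * hw
  exact hxy (hinj a key)
end

section
/- Let F = GF(q) be a finite field, let Δ be a positive divisor of q − 1, let d, t be positive integers, let h₁ : F → F be any function and h₂ : F → F an additive function, and for a ∈ F set f_a(x) = h₁(x) + h₂(ax) + a²x. Suppose the family {f_a : a ∈ F} is of class Δ, i.e. f_a(bx) = b^t · f_{a·b^d}(x) for every b ∈ F with b^((q−1)/Δ) = 1 and all a, x ∈ F. Let ε be a generator of the multiplicative group F*. Then f_a is a bijection of F for every a ∈ F if and only if f_0 is a bijection and f_{ε^r} is a bijection for every r with 0 ≤ r < gcd(q − 1, Δ·d). -/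
/-- Class-Δ reduction: let `F = GF(q)`, `Δ ∣ q − 1`, `h₂` additive, and
`f_a(x) = h₁(x) + h₂(ax) + a²x`. Suppose the family `{f_a}` is of class `Δ`,
i.e. `f_a(bx) = b^t · f_{a·b^d}(x)` whenever `b^((q−1)/Δ) = 1`, and let `ε`
generate `F*`. Then every `f_a` is a bijection iff `f_0` is a bijection and
`f_{ε^r}` is a bijection for every `0 ≤ r < gcd(q − 1, Δ·d)`. -/
theorem stmt_18 (F : Type*) [Field F] [Fintype F]
    (q : ℕ) (hq : Fintype.card F = q)
    (Δ d t : ℕ) (hΔ : 0 < Δ) (hΔdvd : Δ ∣ q - 1) (hd : 0 < d) (ht : 0 < t)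
    (h₁ h₂ : F → F) (hadd : ∀ x u : F, h₂ (x + u) = h₂ x + h₂ u)
    (f : F → F → F)
    (hf : ∀ a x : F, f a x = h₁ x + h₂ (a * x) + a ^ 2 * x)
    (hclass : ∀ b : F, b ^ ((q - 1) / Δ) = 1 →
      ∀ a x : F, f a (b * x) = b ^ t * f (a * b ^ d) x)
    (ε : F) (hε : ∀ z : F, z ≠ 0 → ∃ n : ℕ, z = ε ^ n) :
    (∀ a : F, Function.Bijective (f a)) ↔
      (Function.Bijective (f 0) ∧
        ∀ r : ℕ, r < Nat.gcd (q - 1) (Δ * d) →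
          Function.Bijective (f (ε ^ r))) := by
  constructor
  · intro h
    exact ⟨h 0, fun r _ => h _⟩
  · rintro ⟨h0, hr⟩ a
    by_cases ha : a = 0
    · subst ha; exact h0
    obtain ⟨n, rfl⟩ := hε a ha
    have hq2 : 2 ≤ q := by rw [← hq]; exact Fintype.one_lt_card
    have hN : 0 < q - 1 := by omega
    set N := q - 1 with hNdef
    set g := Nat.gcd N (Δ * d) with hg
    have hgpos : 0 < g := Nat.gcd_pos_of_pos_left _ hN
    by_cases hε0 : ε = 0
    · rcases Nat.eq_zero_or_pos n with rfl | hn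
      · exact hr 0 hgpos
      · exact absurd (by rw [hε0, zero_pow hn.ne']) ha
    have hεN : ε ^ N = 1 := by
      have := FiniteField.pow_card_sub_one_eq_one ε hε0
      rwa [hq] at this
    have hpow : ∀ m : ℕ, ε ^ m = ε ^ (m % N) := by
      intro m
      conv_lhs => rw [← Nat.div_add_mod m N]
      rw [pow_add, pow_mul, hεN, one_pow, one_mul]
    -- transfer lemma
    have key : ∀ m k : ℕ, Function.Bijective (f (ε ^ (m + Δ * d * k))) →
        Function.Bijective (f (ε ^ m)) := by
      intro m k hbij
      have hb0 : (ε ^ (Δ * k)) ≠ 0 := pow_ne_zero _ hε0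
      have hb1 : (ε ^ (Δ * k)) ^ ((q - 1) / Δ) = 1 := by
        rw [← pow_mul]
        have he : Δ * k * ((q - 1) / Δ) = N * k := by
          rw [mul_comm Δ k, mul_assoc, Nat.mul_div_cancel' hΔdvd, mul_comm]
        rw [he, pow_mul, hεN, one_pow]
      have hexp : ε ^ m * (ε ^ (Δ * k)) ^ d = ε ^ (m + Δ * d * k) := by
        rw [← pow_mul, ← pow_add]
        ring_nf
      have comp : (f (ε ^ m)) ∘ (fun x => ε ^ (Δ * k) * x)
          = (fun y => (ε ^ (Δ * k)) ^ t * y) ∘ (f (ε ^ (m + Δ * d * k))) := by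
        funext x
        simp only [Function.comp]
        rw [hclass _ hb1 _ x, hexp]
      have hmul1 : Function.Bijective (fun x : F => ε ^ (Δ * k) * x) :=
        mulLeft_bijective₀ _ hb0
      have hmul2 : Function.Bijective (fun y : F => (ε ^ (Δ * k)) ^ t * y) :=
        mulLeft_bijective₀ _ (pow_ne_zero _ hb0)
      have : Function.Bijective ((f (ε ^ m)) ∘ (fun x => ε ^ (Δ * k) * x)) := by
        rw [comp]; exact hmul2.comp hbij
      exact (Function.Bijective.of_comp_iff _ hmul1).mp this
    -- number theory: find k with n + Δ*d*k ≡ n % g [MOD N]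
    obtain ⟨k, hk⟩ : ∃ k : ℕ, (n + Δ * d * k) ≡ n % g [MOD N] := by
      set D := Δ * d with hD
      obtain ⟨r0, hr0⟩ : ∃ r0, n % g = r0 := ⟨_, rfl⟩
      set A : ℤ := Nat.gcdA N D with hA
      set B : ℤ := Nat.gcdB N D with hB
      have hbez : (g : ℤ) = N * A + D * B := Nat.gcd_eq_gcd_ab N D
      set s : ℕ := n / g with hs
      have hnr : g * s + r0 = n := by rw [← hr0]; exact Nat.div_add_mod n g
      set z : ℤ := (-B * s) % N with hz
      have hz0 : 0 ≤ z := Int.emod_nonneg _ (by exact_mod_cast hN.ne')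
      refine ⟨z.toNat, ?_⟩
      rw [hr0, Nat.modEq_iff_dvd]
      have hzc : (z.toNat : ℤ) = z := Int.toNat_of_nonneg hz0
      have hnrZ : (g : ℤ) * s + r0 = n := by exact_mod_cast hnr
      have hcast : ((r0 : ℕ) : ℤ) - ((n + D * z.toNat : ℕ) : ℤ)
          = -((g : ℤ) * s + D * z) := by
        push_cast [hzc]
        linarith
      rw [hcast]
      apply dvd_neg.mpr
      have h1 : (D : ℤ) * z ≡ D * (-B * s) [ZMOD (N : ℤ)] :=
        Int.ModEq.mul_left _ (Int.emod_emod_of_dvd _ dvd_rfl)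
      have h2 : (g : ℤ) * s + D * (-B * s) = N * (A * s) := by rw [hbez]; ring
      have h3 : (g : ℤ) * s + D * z ≡ 0 [ZMOD (N : ℤ)] := by
        calc (g : ℤ) * s + D * z ≡ (g : ℤ) * s + D * (-B * s) [ZMOD (N : ℤ)] :=
              Int.ModEq.add_left _ h1
          _ ≡ 0 [ZMOD (N : ℤ)] := by
              rw [h2]; exact (Int.modEq_zero_iff_dvd).mpr ⟨A * s, rfl⟩
      exact (Int.modEq_zero_iff_dvd).mp h3
    have hfin : ε ^ (n + Δ * d * k) = ε ^ (n % g) := by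
      rw [hpow (n + Δ * d * k), hpow (n % g)]
      rw [hk]
    apply key n k
    rw [hfin]
    exact hr _ (Nat.mod_lt _ hgpos)
end
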